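/- Let V be a finite type, let G : SimpleGraph V be a tree (G.IsTree), and let θ : Equiv.Perm V satisfy θ x ≠ x for every x : V. Let p : ∀ u v : V, G.Walk u v be any family of walks such that (p u v).IsPath for all u v (in a tree such a path exists and is unique). Then ∑_{d : G.Dart} ( (if d ∈ (p (θ d.toProd.1) (θ d.toProd.2)).darts then (1 : ℤ) else 0) - (if d.symm ∈ (p (θ d.toProd.1) (θ d.toProd.2)).darts then (1 : ℤ) else 0) ) = -2. -/

import Mathlib

set_option linter.unusedSectionVars false

open SimpleGraph

namespace TreeTraceAux

variable {V : Type*} [Fintype V] [DecidableEq V] {G : SimpleGraph V}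

open scoped Classical in
noncomputable def chi (G : SimpleGraph V) (d : G.Dart) (x : V) : ℤ :=
  if (G \ fromEdgeSet {d.edge}).Reachable d.snd x then 1 else 0

lemma chi_snd (d : G.Dart) : chi G d d.snd = 1 := by
  simp [chi, Reachable.refl]

lemma chi_fst (hG : G.IsAcyclic) (d : G.Dart) : chi G d d.fst = 0 := by
  have hb : G.IsBridge s(d.fst, d.snd) := (isAcyclic_iff_forall_adj_isBridge.mp hG) d.adj
  rw [isBridge_iff] at hb
  have hedge : d.edge = s(d.fst, d.snd) := rfl
  have : ¬ (G \ fromEdgeSet {d.edge}).Reachable d.snd d.fst := by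
    rw [hedge]
    exact fun h => hb h.symm
  simp [chi, this]

lemma chi_eq_of_adj (d : G.Dart) {a b : V} (h : G.Adj a b) (hne : s(a, b) ≠ d.edge) :
    chi G d a = chi G d b := by
  have hadj : (G \ fromEdgeSet {d.edge}).Adj a b := by
    rw [sdiff_adj]
    exact ⟨h, by simp [fromEdgeSet_adj, hne]⟩
  unfold chi
  congr 1
  exact propext ⟨fun hr => hr.trans hadj.reachable, fun hr => hr.trans hadj.symm.reachable⟩

lemma count_darts (hG : G.IsAcyclic) (d : G.Dart) :
    ∀ {u v : V} (w : G.Walk u v),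
      ((w.darts.count d : ℤ) - w.darts.count d.symm) = chi G d v - chi G d u := by
  intro u v w
  induction w with
  | nil => simp
  | @cons a b c h q ih =>
    rw [Walk.darts_cons, List.count_cons, List.count_cons]
    push_cast
    have key : ((if (⟨(a, b), h⟩ : G.Dart) = d then (1:ℤ) else 0) -
        (if (⟨(a, b), h⟩ : G.Dart) = d.symm then (1:ℤ) else 0)) = chi G d b - chi G d a := by
      by_cases h1 : (⟨(a, b), h⟩ : G.Dart) = d
      · have hfst : d.fst = a := by rw [← h1]
        have hsnd : d.snd = b := by rw [← h1]
        have h2 : (⟨(a, b), h⟩ : G.Dart) ≠ d.symm := by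
          rw [h1]
          exact fun hh => d.symm_ne hh.symm
        rw [if_pos h1, if_neg h2, ← hfst, ← hsnd, chi_snd, chi_fst hG]
      · by_cases h2 : (⟨(a, b), h⟩ : G.Dart) = d.symm
        · have hp := congrArg (fun e : G.Dart => e.toProd) h2
          simp [Dart.symm_toProd, Prod.ext_iff] at hp
          have hfst : d.snd = a := hp.1.symm
          have hsnd : d.fst = b := hp.2.symm
          rw [if_neg h1, if_pos h2, ← hfst, ← hsnd, chi_snd, chi_fst hG]
        · have hne : s(a, b) ≠ d.edge := by
            intro he
            have : (⟨(a, b), h⟩ : G.Dart).edge = d.edge := he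
            rcases dart_edge_eq_iff _ _ |>.mp this with h' | h'
            · exact h1 h'
            · exact h2 h'
          rw [if_neg h1, if_neg h2, chi_eq_of_adj d h hne]
          ring
    simp only [beq_iff_eq]
    linarith [key, ih]

lemma count_eq_ite {u v : V} {w : G.Walk u v} (hw : w.IsPath) (d : G.Dart) :
    ((w.darts.count d : ℤ)) = if d ∈ w.darts then 1 else 0 := by
  have hnd : w.darts.Nodup := Walk.darts_nodup_of_support_nodup hw.support_nodup
  split
  · rw [List.count_eq_one_of_mem hnd ‹_›]; rfl
  · rw [List.count_eq_zero_of_not_mem ‹_›]; rfl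

lemma snd_ne_start {v x : V} {w : G.Walk v x} (hw : w.IsPath) {d : G.Dart}
    (hd : d ∈ w.darts) : d.snd ≠ v := by
  cases w with
  | nil => simp at hd
  | @cons a b c h q =>
    rw [Walk.darts_cons, List.mem_cons] at hd
    rcases hd with rfl | hd
    · exact h.ne'
    · intro he
      have hmem := q.dart_snd_mem_support_of_mem_darts hd
      rw [he] at hmem
      exact ((Walk.cons_isPath_iff _ _).mp hw).2 hmem

lemma firstDart_mem {v x : V} (w : G.Walk v x) (hn : ¬ w.Nil) : w.firstDart hn ∈ w.darts := by
  cases w with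
  | nil => simp at hn
  | @cons a b c h q =>
    rw [Walk.darts_cons, List.mem_cons]
    left
    exact Dart.ext _ _ (by simp [Walk.firstDart])

lemma eq_firstDart {v x : V} {w : G.Walk v x} (hw : w.IsPath) (hn : ¬ w.Nil) {d : G.Dart}
    (hd : d ∈ w.darts) (hfst : d.fst = v) : d = w.firstDart hn := by
  cases w with
  | nil => simp at hd
  | @cons a b c h q =>
    rw [Walk.darts_cons, List.mem_cons] at hd
    rcases hd with rfl | hd
    · exact Dart.ext _ _ (by simp [Walk.firstDart])
    · exfalso
      have hmem := q.dart_fst_mem_support_of_mem_darts hd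
      rw [hfst] at hmem
      exact ((Walk.cons_isPath_iff _ _).mp hw).2 hmem

/-- The involution on darts. -/
def dartSymm (G : SimpleGraph V) : G.Dart ≃ G.Dart :=
  ⟨Dart.symm, Dart.symm, Dart.symm_symm, Dart.symm_symm⟩

end TreeTraceAux

theorem tree_vertex_map_trace_sum {V : Type*} [Fintype V] [DecidableEq V]
    (G : SimpleGraph V) [DecidableRel G.Adj] (hG : G.IsTree)
    (θ : Equiv.Perm V) (hθ : ∀ x : V, θ x ≠ x)
    (p : ∀ u v : V, G.Walk u v) (hp : ∀ u v : V, (p u v).IsPath) :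
    ∑ d : G.Dart,
        ((if d ∈ (p (θ d.toProd.1) (θ d.toProd.2)).darts then (1 : ℤ) else 0) -
          (if d.symm ∈ (p (θ d.toProd.1) (θ d.toProd.2)).darts then (1 : ℤ) else 0)) = -2 := by
  classical
  obtain ⟨hconn, hac⟩ := hG
  have hG' : G.IsTree := ⟨hconn, hac⟩
  have hPnil : ∀ v : V, ¬ (p v (θ v)).Nil := fun v => Walk.not_nil_of_ne (Ne.symm (hθ v))
  set FD : V → G.Dart := fun v => (p v (θ v)).firstDart (hPnil v) with hFD
  set A : G.Dart → ℤ := fun d => ((p d.toProd.2 (θ d.toProd.2)).darts.count d : ℤ) with hA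
  set B : G.Dart → ℤ := fun d => ((p d.toProd.2 (θ d.toProd.2)).darts.count d.symm : ℤ) with hB
  set C : G.Dart → ℤ := fun d => ((p d.toProd.1 (θ d.toProd.1)).darts.count d : ℤ) with hC
  set D : G.Dart → ℤ := fun d => ((p d.toProd.1 (θ d.toProd.1)).darts.count d.symm : ℤ) with hD
  have step1 : ∀ d : G.Dart,
      ((if d ∈ (p (θ d.toProd.1) (θ d.toProd.2)).darts then (1:ℤ) else 0) -
        (if d.symm ∈ (p (θ d.toProd.1) (θ d.toProd.2)).darts then (1:ℤ) else 0)) =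
      1 + (A d - B d) - (C d - D d) := by
    intro d
    rw [← TreeTraceAux.count_eq_ite (hp _ _) d, ← TreeTraceAux.count_eq_ite (hp _ _) d.symm]
    rw [TreeTraceAux.count_darts hac d (p (θ d.toProd.1) (θ d.toProd.2))]
    have e1 : A d - B d
        = TreeTraceAux.chi G d (θ d.toProd.2) - TreeTraceAux.chi G d d.toProd.2 :=
      TreeTraceAux.count_darts hac d (p d.toProd.2 (θ d.toProd.2))
    have e2 : C d - D d
        = TreeTraceAux.chi G d (θ d.toProd.1) - TreeTraceAux.chi G d d.toProd.1 :=
      TreeTraceAux.count_darts hac d (p d.toProd.1 (θ d.toProd.1))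
    have h1 : TreeTraceAux.chi G d d.toProd.2 = 1 := TreeTraceAux.chi_snd d
    have h2 : TreeTraceAux.chi G d d.toProd.1 = 0 := TreeTraceAux.chi_fst hac d
    rw [e1, e2, h1, h2]
    ring
  rw [Finset.sum_congr rfl (fun d _ => step1 d)]
  have hAzero : ∀ d : G.Dart, A d = 0 := by
    intro d
    have : d ∉ (p d.toProd.2 (θ d.toProd.2)).darts := fun hmem =>
      TreeTraceAux.snd_ne_start (hp _ _) hmem rfl
    simp [hA, List.count_eq_zero.mpr this]
  have hDA : ∑ d : G.Dart, D d = ∑ d : G.Dart, A d := by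
    rw [← Equiv.sum_comp (TreeTraceAux.dartSymm G) D]
    refine Finset.sum_congr rfl fun d _ => ?_
    simp only [hD, hA, TreeTraceAux.dartSymm, Equiv.coe_fn_mk, Dart.symm_symm]
    rfl
  have hCB : ∑ d : G.Dart, C d = ∑ d : G.Dart, B d := by
    rw [← Equiv.sum_comp (TreeTraceAux.dartSymm G) C]
    refine Finset.sum_congr rfl fun d _ => ?_
    simp only [hC, hB, TreeTraceAux.dartSymm, Equiv.coe_fn_mk]
    rfl
  have hBcard : ∑ d : G.Dart, B d = (Fintype.card V : ℤ) := by
    rw [← Equiv.sum_comp (TreeTraceAux.dartSymm G) B]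
    have hterm : ∀ d : G.Dart, B ((TreeTraceAux.dartSymm G) d)
        = if d = FD d.toProd.1 then 1 else 0 := by
      intro d
      have hBs : B ((TreeTraceAux.dartSymm G) d)
          = ((p d.toProd.1 (θ d.toProd.1)).darts.count d : ℤ) := by
        simp only [hB, TreeTraceAux.dartSymm, Equiv.coe_fn_mk, Dart.symm_symm]
        rfl
      rw [hBs, TreeTraceAux.count_eq_ite (hp _ _) d]
      congr 1
      apply propext
      constructor
      · intro hmem
        exact TreeTraceAux.eq_firstDart (hp _ _) (hPnil _) hmem rfl
      · intro hd
        rw [hd]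
        exact TreeTraceAux.firstDart_mem _ _
    rw [Finset.sum_congr rfl (fun d _ => hterm d)]
    rw [Finset.sum_boole]
    have himg : Finset.univ.filter (fun d : G.Dart => d = FD d.toProd.1)
        = Finset.univ.image FD := by
      ext d
      simp only [Finset.mem_filter, Finset.mem_image, Finset.mem_univ, true_and]
      constructor
      · intro hd
        exact ⟨d.toProd.1, hd.symm⟩
      · rintro ⟨v, rfl⟩
        rfl
    rw [himg, Finset.card_image_of_injective _ (fun v w hvw => congrArg (fun d : G.Dart => d.toProd.1) hvw)]
    simp
  have hcard : (Fintype.card G.Dart : ℤ) = 2 * (G.edgeFinset.card : ℤ) := by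
    exact_mod_cast congrArg Nat.cast (G.dart_card_eq_twice_card_edges)
  have hedge : (G.edgeFinset.card : ℤ) + 1 = (Fintype.card V : ℤ) := by
    exact_mod_cast congrArg Nat.cast hG'.card_edgeFinset
  have hApart : ∑ d : G.Dart, A d = 0 := by
    simp [hAzero]
  rw [Finset.sum_sub_distrib, Finset.sum_add_distrib, Finset.sum_sub_distrib,
    Finset.sum_sub_distrib, hApart, hBcard, hCB, hBcard, hDA, hApart]
  simp only [Finset.sum_const, Finset.card_univ, nsmul_eq_mul, mul_one]
  rw [hcard] at *
  linarith [hcard, hedge]
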